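/- The monic matrix polynomial D(λ) = λ² I + N, with N = [[0,1],[0,0]], is irreducible in the sense that there do not exist 2×2 complex matrices B and C with λ² I + N = (λ I − C)(λ I − B) for all λ ∈ ℂ. The same holds with N replaced by P N P⁻¹ for any invertible P. -/

import Mathlib

open Matrix

lemma key (A : Matrix (Fin 2) (Fin 2) ℂ) (hA2 : A * A = 0) (hA : A ≠ 0) :
    ¬ ∃ B C : Matrix (Fin 2) (Fin 2) ℂ, ∀ lam : ℂ,
        lam ^ 2 • (1 : Matrix (Fin 2) (Fin 2) ℂ) + A
          = (lam • (1 : Matrix (Fin 2) (Fin 2) ℂ) - C) *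
              (lam • (1 : Matrix (Fin 2) (Fin 2) ℂ) - B) := by
  rintro ⟨B, C, h⟩
  have h0 : A = C * B := by
    have := h 0
    simpa using this
  have h1 : (1 : Matrix (Fin 2) (Fin 2) ℂ) + A = 1 - B - C + C * B := by
    have := h 1
    simp only [one_pow, one_smul] at this
    rw [this]; noncomm_ring
  rw [h0] at h1
  have hsum : B + C = 0 := by
    have h5 : -(B + C) = (0 : Matrix (Fin 2) (Fin 2) ℂ) := by
      rw [show -(B + C) = (1 - B - C + C * B) - (1 + C * B) from by noncomm_ring, ← h1,
        sub_self]
    simpa using neg_eq_zero.mp h5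
  have hC : C = -B := eq_neg_of_add_eq_zero_right hsum
  have hBB : B * B = -A := by
    rw [h0, hC]; noncomm_ring
  have h4 : (B * B) * (B * B) = 0 := by
    rw [hBB]; simpa using hA2
  have hdetA : A.det = 0 := by
    have : A.det * A.det = 0 := by rw [← det_mul, hA2, det_zero]
    exact mul_self_eq_zero.mp this
  have hdetB : B.det = 0 := by
    have : B.det * B.det = 0 := by
      rw [← det_mul, hBB, det_neg]
      simp [hdetA]
    exact mul_self_eq_zero.mp this
  set s : ℂ := B 0 0 + B 1 1 with hs
  have hCH : B * B = s • B := by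
    have hp : B 0 0 * B 1 1 - B 0 1 * B 1 0 = 0 := by
      rw [← det_fin_two]; exact hdetB
    ext i j
    fin_cases i <;> fin_cases j <;>
      simp [Matrix.mul_apply, Fin.sum_univ_two, hs] <;>
      first | ring1 | linear_combination -hp
  have hB4 : (s ^ 3) • B = 0 := by
    calc (s ^ 3) • B = (s • B) * (s • B) := by rw [smul_mul_smul_comm, hCH]; module
    _ = 0 := by rw [← hCH, h4]
  rcases smul_eq_zero.mp hB4 with hs0 | hB0
  · have hs0' : s = 0 := pow_eq_zero_iff (n := 3) (by norm_num) |>.mp hs0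
    apply hA
    have hz : B * B = 0 := by rw [hCH, hs0', zero_smul]
    rw [hz] at hBB
    simpa using hBB.symm
  · apply hA
    rw [hB0] at hBB
    simpa using hBB.symm

theorem stmt8 :
    (¬ ∃ B C : Matrix (Fin 2) (Fin 2) ℂ, ∀ lam : ℂ,
        lam ^ 2 • (1 : Matrix (Fin 2) (Fin 2) ℂ) + !![0, 1; 0, 0]
          = (lam • (1 : Matrix (Fin 2) (Fin 2) ℂ) - C) *
              (lam • (1 : Matrix (Fin 2) (Fin 2) ℂ) - B)) ∧
    ∀ P : Matrix (Fin 2) (Fin 2) ℂ, IsUnit P.det →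
      ¬ ∃ B C : Matrix (Fin 2) (Fin 2) ℂ, ∀ lam : ℂ,
        lam ^ 2 • (1 : Matrix (Fin 2) (Fin 2) ℂ) + P * !![0, 1; 0, 0] * P⁻¹
          = (lam • (1 : Matrix (Fin 2) (Fin 2) ℂ) - C) *
              (lam • (1 : Matrix (Fin 2) (Fin 2) ℂ) - B) := by
  have hN2 : (!![0, 1; 0, 0] : Matrix (Fin 2) (Fin 2) ℂ) * !![0, 1; 0, 0] = 0 := by
    ext i j
    fin_cases i <;> fin_cases j <;> simp [Matrix.mul_apply, Fin.sum_univ_two]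
  have hN0 : (!![0, 1; 0, 0] : Matrix (Fin 2) (Fin 2) ℂ) ≠ 0 := by
    intro hcon
    have := congrFun (congrFun hcon 0) 1
    simp at this
  constructor
  · exact key _ hN2 hN0
  · intro P hP
    apply key
    · calc P * !![0, 1; 0, 0] * P⁻¹ * (P * !![0, 1; 0, 0] * P⁻¹)
          = P * (!![0, 1; 0, 0] * (P⁻¹ * P) * !![0, 1; 0, 0]) * P⁻¹ := by
            noncomm_ring
      _ = 0 := by rw [nonsing_inv_mul P hP, mul_one, hN2]; simp
    · intro hcon
      apply hN0
      have : P⁻¹ * (P * !![0, 1; 0, 0] * P⁻¹) * P = 0 := by rw [hcon]; simp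
      rw [← Matrix.mul_assoc, ← Matrix.mul_assoc, nonsing_inv_mul P hP, one_mul,
        Matrix.mul_assoc, nonsing_inv_mul P hP, mul_one] at this
      exact this
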